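/- Let X and V be complex Hilbert spaces with X separable, and let A : X → X* be a positive linear operator with factorization A = S*TS, where S : X → V is compact and injective and T : V → V is bounded and coercive on Range(S). For ℓ ∈ X* and α > 0, let x_α = Σ_n (λ_n/(α λ_n + λ_n²)) conj(⟨x_n, ℓ⟩_{X×X*}) x_n, the unique minimizer of the functional J_α(ℓ; x) = α ⟨x, Ax⟩_{X×X*} + ‖Ax − ℓ‖²_{X*}. Then x_α coincides with the regularized solution of Ax = ℓ for the filter functions f_α(t) = t/(α + t), and ℓ ∈ Range(S*) if and only if liminf_{α→0} ⟨x_α, Ax_α⟩_{X×X*} < ∞. -/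

import Mathlib

open Complex InnerProductSpace Filter Topology ENNReal TopologicalSpace

noncomputable section

local notation "⟪" x ", " y "⟫" => @inner ℂ _ _ x y

/-- `X*`: the continuous dual of a complex Hilbert space `X`, modeled as the space of
continuous conjugate-linear functionals, so that the dual pairing
`⟨x, ℓ⟩_{X×X*} := conj (ℓ x)` is sesquilinear (linear in `x`, conjugate-linear in `ℓ`). -/
abbrev ADual (X : Type*) [NormedAddCommGroup X] [InnerProductSpace ℂ X] := X →L⋆[ℂ] ℂ

section defs
variable {X : Type*} [NormedAddCommGroup X] [InnerProductSpace ℂ X]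

/-- The sesquilinear dual pairing `⟨x, ℓ⟩_{X×X*}`. -/
def dpair (x : X) (ℓ : ADual X) : ℂ := starRingEnd ℂ (ℓ x)

variable [CompleteSpace X]

/-- `J : X* → X`, the Riesz isometry, determined by `(x, Jℓ)_X = ⟨x, ℓ⟩_{X×X*}`
(with the paper's inner product, linear in the first slot; in Mathlib's convention
this reads `⟪Jℓ, x⟫ = conj (ℓ x)` for all `x`). -/
def rieszJ (ℓ : ADual X) : X :=
  (InnerProductSpace.toDual ℂ X).symm
    { toFun := fun x => starRingEnd ℂ (ℓ x)
      map_add' := fun x y => by simp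
      map_smul' := fun c x => by simp [mul_comm]
      cont := continuous_star.comp ℓ.continuous }

/-- A bounded operator `A : X → X*` is positive if `⟨x, Ax⟩_{X×X*} > 0`
(i.e. it is a positive real number) for every `x ≠ 0`. -/
def IsPositiveOp (A : X →L[ℂ] ADual X) : Prop :=
  ∀ x : X, x ≠ 0 → 0 < (dpair x (A x)).re ∧ (dpair x (A x)).im = 0

/-- Spectral data `{λ_n; x_n; ℓ_n}` of a positive compact operator `A : X → X*`:
a nonincreasing sequence `λ_n > 0` tending to `0`, an orthonormal basis `x_n` of `X`
of eigenvectors of `JA` with `(JA)x_n = λ_n x_n`, and the dual basis `ℓ_n = J⁻¹x_n`. -/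
structure SpectralData (A : X →L[ℂ] ADual X) (lam : ℕ → ℝ) (e : ℕ → X)
    (l : ℕ → ADual X) : Prop where
  pos : ∀ n, 0 < lam n
  anti : Antitone lam
  tendsto_zero : Tendsto lam atTop (𝓝 0)
  orthonormal : Orthonormal ℂ e
  complete : (Submodule.span ℂ (Set.range e)).topologicalClosure = ⊤
  eig : ∀ n, rieszJ (A (e n)) = (lam n : ℂ) • e n
  dual_basis : ∀ n, rieszJ (l n) = e n

/-- A family of filter functions `f_α : (0, λ₁] → [0, ∞)`, `α > 0`, with
`f_α(t) → 1` as `α → 0` for every `t ∈ (0, λ₁]` and `f_α(t) ≤ C_reg`. -/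
def IsFilterFamily (lam : ℕ → ℝ) (Creg : ℝ) (f : ℝ → ℝ → ℝ) : Prop :=
  0 < Creg ∧
    (∀ t ∈ Set.Ioc (0 : ℝ) (lam 0), Tendsto (fun α => f α t) (𝓝[>] (0 : ℝ)) (𝓝 1)) ∧
    (∀ α > (0 : ℝ), ∀ t ∈ Set.Ioc (0 : ℝ) (lam 0), 0 ≤ f α t ∧ f α t ≤ Creg)

/-- `x_α`, the regularized solution of `Ax = ℓ` for the filter family `f`:
`x_α = Σ_n (f_α(λ_n)/λ_n) conj(⟨x_n, ℓ⟩) x_n`. -/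
def IsRegSolution (lam : ℕ → ℝ) (e : ℕ → X) (f : ℝ → ℝ → ℝ) (ℓ : ADual X)
    (xa : ℝ → X) : Prop :=
  ∀ α : ℝ, 0 < α →
    HasSum
      (fun n => (((f α (lam n) / lam n : ℝ) : ℂ) * starRingEnd ℂ (dpair (e n) ℓ)) • e n)
      (xa α)

end defs

section adj
variable {X V : Type*} [NormedAddCommGroup X] [InnerProductSpace ℂ X] [CompleteSpace X]
  [NormedAddCommGroup V] [InnerProductSpace ℂ V] [CompleteSpace V]

/-- The adjoint `S* : V → X*` of a bounded operator `S : X → V`, determined by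
`(Sx, v)_V = ⟨x, S*v⟩_{X×X*}` for all `x ∈ X`, `v ∈ V`. -/
def hadj (S : X →L[ℂ] V) : V →L[ℂ] ADual X :=
  LinearMap.mkContinuous
    { toFun := fun v =>
        { toFun := fun x => ⟪S x, v⟫
          map_add' := fun x y => by simp [inner_add_left]
          map_smul' := fun c x => by simp [inner_smul_left]; ring
          cont := (S.continuous.inner continuous_const) }
      map_add' := fun v w => by ext x; simp [inner_add_right]
      map_smul' := fun c v => by ext x; simp [inner_smul_right] }
    ‖S‖
    (fun v => by
      apply ContinuousLinearMap.opNorm_le_bound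
      · positivity
      · intro x
        calc ‖⟪S x, v⟫‖ ≤ ‖S x‖ * ‖v‖ := norm_inner_le_norm _ _
          _ ≤ (‖S‖ * ‖x‖) * ‖v‖ := by gcongr; exact S.le_opNorm x
          _ = ‖S‖ * ‖v‖ * ‖x‖ := by ring)

/-- A bounded operator `T : V → V` is coercive on the range of `S : X → V` if there is
`β > 0` with `β‖Sx‖² ≤ (Sx, TSx)_V` for all `x ∈ X`. -/
def CoerciveOnRange (S : X →L[ℂ] V) (T : V →L[ℂ] V) : Prop :=
  ∃ β : ℝ, 0 < β ∧ ∀ x : X, β * ‖S x‖ ^ 2 ≤ (⟪T (S x), S x⟫).re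

end adj


section auxlemmas
variable {X V : Type*} [NormedAddCommGroup X] [InnerProductSpace ℂ X] [CompleteSpace X]
  [NormedAddCommGroup V] [InnerProductSpace ℂ V] [CompleteSpace V]

lemma rieszJ_inner (m : ADual X) (x : X) : ⟪rieszJ m, x⟫ = starRingEnd ℂ (m x) := by
  simp only [rieszJ]
  exact InnerProductSpace.toDual_symm_apply

omit [CompleteSpace X] [CompleteSpace V] in
lemma hadj_apply (S : X →L[ℂ] V) (v : V) (x : X) : hadj S v x = ⟪S x, v⟫ := rfl

omit [CompleteSpace X] in
/-- The evaluation map `ADual X →L[ℂ] ℂ` at a point. -/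
def evalAt (x : X) : ADual X →L[ℂ] ℂ :=
  LinearMap.mkContinuous
    { toFun := fun m => m x
      map_add' := fun m₁ m₂ => rfl
      map_smul' := fun c m => rfl }
    ‖x‖ (fun m => by rw [mul_comm]; exact m.le_opNorm x)

omit [CompleteSpace X] in
lemma evalAt_apply (x : X) (m : ADual X) : evalAt x m = m x := rfl

end auxlemmas

set_option maxHeartbeats 2000000 in

/-- With `A = S*TS` as in the Regularized Factorization Method and
`x_α = Σ_n (λ_n/(αλ_n + λ_n²)) conj(⟨x_n, ℓ⟩) x_n` (the GLSM minimizer), `x_α` is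
the regularized solution of `Ax = ℓ` for the filter functions `f_α(t) = t/(α + t)`,
and `ℓ ∈ Range(S*)` iff `liminf_{α→0} ⟨x_α, Ax_α⟩ < ∞`. -/
theorem glsm_is_regularization_and_range_characterization
    {X V : Type*}
    [NormedAddCommGroup X] [InnerProductSpace ℂ X] [CompleteSpace X] [SeparableSpace X]
    [NormedAddCommGroup V] [InnerProductSpace ℂ V] [CompleteSpace V]
    (A : X →L[ℂ] ADual X) (hpos : IsPositiveOp A)
    (S : X →L[ℂ] V) (T : V →L[ℂ] V)
    (hAS : A = (hadj S).comp (T.comp S))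
    (hScpt : IsCompactOperator ⇑S) (hSinj : Function.Injective ⇑S)
    (hT : CoerciveOnRange S T)
    (lam : ℕ → ℝ) (e : ℕ → X) (l : ℕ → ADual X)
    (hspec : SpectralData A lam e l)
    (ℓ : ADual X) (xa : ℝ → X)
    (hxa : ∀ α : ℝ, 0 < α →
      HasSum
        (fun n => (((lam n / (α * lam n + lam n ^ 2) : ℝ) : ℂ) *
          starRingEnd ℂ (dpair (e n) ℓ)) • e n) (xa α)) :
    IsRegSolution lam e (fun α t => t / (α + t)) ℓ xa ∧
      (ℓ ∈ Set.range ⇑(hadj S) ↔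
        Filter.liminf (fun α => ENNReal.ofReal ((dpair (xa α) (A (xa α))).re))
          (𝓝[>] (0 : ℝ)) < ⊤) := by
  classical
  obtain ⟨β, hβ, hcoer⟩ := hT
  have hlampos := hspec.pos
  -- orthonormality as a delta
  have hon : ∀ m n, ⟪e m, e n⟫ = if m = n then (1 : ℂ) else 0 :=
    orthonormal_iff_ite.mp hspec.orthonormal
  -- Hilbert basis expansion
  have hb : ∀ x : X, HasSum (fun n => ⟪e n, x⟫ • e n) x := by
    intro x
    have h := (HilbertBasis.mk hspec.orthonormal hspec.complete.ge).hasSum_repr x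
    have hcoe : ⇑(HilbertBasis.mk hspec.orthonormal hspec.complete.ge) = e :=
      HilbertBasis.coe_mk _ _
    have hc : ∀ n, (HilbertBasis.mk hspec.orthonormal hspec.complete.ge : HilbertBasis ℕ ℂ X) n
        = e n := fun n => congrFun hcoe n
    simp only [HilbertBasis.repr_apply_apply, hc] at h
    exact h
  -- coefficient extraction
  have hcoeff : ∀ (c : ℕ → ℂ) (x : X), HasSum (fun n => c n • e n) x → ∀ m, ⟪e m, x⟫ = c m := by
    intro c x hx m
    have h1 := (innerSL ℂ (e m)).hasSum hx
    have h2 : HasSum (fun n => if n = m then c m else 0) ⟪e m, x⟫ := by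
      have hfn : ∀ n, innerSL ℂ (e m) (c n • e n) = if n = m then c m else 0 := by
        intro n
        by_cases hnm : n = m
        · subst hnm; simp [inner_smul_right, hon, hspec.orthonormal.1 n]
        · have : m ≠ n := fun h => hnm h.symm
          simp [inner_smul_right, hon, hnm, this]
      simpa only [hfn, innerSL_apply_apply] using h1
    exact ((hasSum_ite_eq m (c m)).unique h2).symm
  -- eigen evaluation
  have heval : ∀ n (x : X), (A (e n)) x = (lam n : ℂ) * ⟪x, e n⟫ := by
    intro n x
    have h := rieszJ_inner (A (e n)) x
    rw [hspec.eig n, inner_smul_left] at h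
    have h2 := congrArg (starRingEnd ℂ) h
    simp only [map_mul, Complex.conj_conj, inner_conj_symm, Complex.conj_ofReal] at h2
    exact h2.symm
  -- spectral quadratic form
  have hquad : ∀ x : X, HasSum (fun n => lam n * ‖⟪e n, x⟫‖ ^ 2) ((dpair x (A x)).re) := by
    intro x
    have h1 : HasSum (fun n => ⟪e n, x⟫ • A (e n)) (A x) := by
      have := A.hasSum (hb x)
      simpa only [map_smul] using this
    have h2 := (evalAt x).hasSum h1
    have h3 : HasSum (fun n => ((lam n * ‖⟪e n, x⟫‖ ^ 2 : ℝ) : ℂ)) ((A x) x) := by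
      have hfn : ∀ n, evalAt x (⟪e n, x⟫ • A (e n)) = ((lam n * ‖⟪e n, x⟫‖ ^ 2 : ℝ) : ℂ) := by
        intro n
        rw [map_smul, smul_eq_mul, evalAt_apply, heval, ← inner_conj_symm x (e n)]
        rw [mul_comm (⟪e n, x⟫), mul_assoc, mul_comm ((starRingEnd ℂ) ⟪e n, x⟫),
          Complex.mul_conj]
        simp only [Complex.normSq_eq_norm_sq]
        push_cast; ring
      simpa only [hfn, evalAt_apply] using h2
    have h4 := Complex.reCLM.hasSum h3
    simp only [Complex.reCLM_apply, Complex.ofReal_re] at h4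
    have h5 : (dpair x (A x)).re = ((A x) x).re := by simp [dpair]
    rw [h5]
    exact h4
  -- quadratic form via factorization
  have hST : ∀ x : X, (dpair x (A x)).re = (⟪T (S x), S x⟫).re := by
    intro x
    rw [hAS]
    simp only [ContinuousLinearMap.comp_apply, dpair, hadj_apply, Complex.conj_re]
    rw [show (⟪T (S x), S x⟫ : ℂ) = starRingEnd ℂ ⟪S x, T (S x)⟫ from
      (inner_conj_symm (T (S x)) (S x)).symm, Complex.conj_re]
  -- coefficients of finite combinations
  have hcz : ∀ (c : ℕ → ℂ) (F : Finset ℕ) m,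
      ⟪e m, ∑ n ∈ F, c n • e n⟫ = if m ∈ F then c m else 0 := by
    intro c F m
    rw [inner_sum (𝕜 := ℂ)]
    simp only [inner_smul_right, hon, mul_ite, mul_one, mul_zero]
    simp [Finset.sum_ite_eq' F m]
  -- coercivity bound for finite combinations
  have hzc : ∀ (c : ℕ → ℂ) (F : Finset ℕ),
      β * ‖S (∑ n ∈ F, c n • e n)‖ ^ 2 ≤ ∑ n ∈ F, lam n * ‖c n‖ ^ 2 := by
    intro c F
    set z : X := ∑ n ∈ F, c n • e n with hz
    have hval : HasSum (fun n => lam n * ‖⟪e n, z⟫‖ ^ 2) (∑ n ∈ F, lam n * ‖⟪e n, z⟫‖ ^ 2) := by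
      apply hasSum_sum_of_ne_finset_zero
      intro n hn
      rw [hcz c F n, if_neg hn]
      simp
    have heq : (∑ n ∈ F, lam n * ‖⟪e n, z⟫‖ ^ 2) = ∑ n ∈ F, lam n * ‖c n‖ ^ 2 := by
      refine Finset.sum_congr rfl fun n hn => ?_
      rw [hcz c F n, if_pos hn]
    have h2 : (dpair z (A z)).re = ∑ n ∈ F, lam n * ‖c n‖ ^ 2 := by
      rw [(hquad z).unique hval, heq]
    calc β * ‖S z‖ ^ 2 ≤ (⟪T (S z), S z⟫).re := hcoer z
      _ = (dpair z (A z)).re := (hST z).symm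
      _ = _ := h2
  -- energy expansion for xa
  have hE : ∀ α : ℝ, 0 < α →
      HasSum (fun n => lam n * ‖dpair (e n) ℓ‖ ^ 2 / (α + lam n) ^ 2)
        ((dpair (xa α) (A (xa α))).re) := by
    intro α hα
    have h := hquad (xa α)
    have hco := hcoeff _ _ (hxa α hα)
    have hterm : ∀ n, lam n * ‖⟪e n, xa α⟫‖ ^ 2
        = lam n * ‖dpair (e n) ℓ‖ ^ 2 / (α + lam n) ^ 2 := by
      intro n
      have hal : (0:ℝ) < α + lam n := by linarith [hlampos n]
      have hq : lam n / (α * lam n + lam n ^ 2) = 1 / (α + lam n) := by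
        rw [div_eq_div_iff (by nlinarith [hlampos n] :
          (0:ℝ) < α * lam n + lam n ^ 2).ne' hal.ne']
        ring
      rw [hco n, norm_mul, Complex.norm_real, RCLike.norm_conj, Real.norm_eq_abs, hq,
        _root_.abs_of_nonneg (by positivity : (0:ℝ) ≤ 1/(α+lam n))]
      rw [mul_pow]
      field_simp
    rw [funext hterm] at h
    exact h
  -- the liminf identity
  have hlim : Filter.liminf (fun α => ENNReal.ofReal ((dpair (xa α) (A (xa α))).re))
      (𝓝[>] (0:ℝ)) = ∑' n, ENNReal.ofReal (‖dpair (e n) ℓ‖ ^ 2 / lam n) := by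
    have hofReal : ∀ α : ℝ, 0 < α →
        ENNReal.ofReal ((dpair (xa α) (A (xa α))).re)
          = ∑' n, ENNReal.ofReal (lam n * ‖dpair (e n) ℓ‖ ^ 2 / (α + lam n) ^ 2) := by
      intro α hα
      rw [← (hE α hα).tsum_eq,
        ENNReal.ofReal_tsum_of_nonneg
          (fun n => div_nonneg (mul_nonneg (hlampos n).le (sq_nonneg _)) (sq_nonneg _))
          (hE α hα).summable]
    apply le_antisymm
    · refine Filter.liminf_le_of_frequently_le' ?_
      refine (eventually_mem_nhdsWithin.mono ?_).frequently
      intro α hα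
      replace hα : (0:ℝ) < α := hα
      rw [hofReal α hα]
      refine ENNReal.tsum_le_tsum fun n => ENNReal.ofReal_le_ofReal ?_
      rw [div_le_div_iff₀ (pow_pos (by linarith [hlampos n]) 2) (hlampos n)]
      nlinarith [hlampos n, sq_nonneg (‖dpair (e n) ℓ‖),
        mul_nonneg (sq_nonneg (‖dpair (e n) ℓ‖)) (sq_nonneg α),
        mul_nonneg (mul_nonneg (sq_nonneg (‖dpair (e n) ℓ‖)) hα.le) (hlampos n).le]
    · rw [ENNReal.tsum_eq_iSup_sum]
      refine iSup_le fun F => ?_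
      have htend : Tendsto
          (fun α : ℝ => ∑ n ∈ F, ENNReal.ofReal (lam n * ‖dpair (e n) ℓ‖ ^ 2 / (α + lam n) ^ 2))
          (𝓝[>] (0:ℝ)) (𝓝 (∑ n ∈ F, ENNReal.ofReal (‖dpair (e n) ℓ‖ ^ 2 / lam n))) := by
        refine tendsto_finset_sum _ fun n _ => ?_
        have hcont : Tendsto (fun α : ℝ => lam n * ‖dpair (e n) ℓ‖ ^ 2 / (α + lam n) ^ 2) (𝓝 0)
            (𝓝 (lam n * ‖dpair (e n) ℓ‖ ^ 2 / ((0:ℝ) + lam n) ^ 2)) := by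
          refine Tendsto.div tendsto_const_nhds ?_
            (by rw [zero_add]; exact pow_ne_zero 2 (hlampos n).ne')
          exact ((continuous_id.add continuous_const).pow 2).tendsto 0
        have heq : lam n * ‖dpair (e n) ℓ‖ ^ 2 / ((0:ℝ) + lam n) ^ 2
            = ‖dpair (e n) ℓ‖ ^ 2 / lam n := by
          rw [zero_add, pow_two (lam n), mul_div_mul_left _ _ (hlampos n).ne']
        rw [heq] at hcont
        exact (ENNReal.continuous_ofReal.tendsto _).comp (hcont.mono_left nhdsWithin_le_nhds)
      have hev : ∀ᶠ α in 𝓝[>] (0:ℝ),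
          ∑ n ∈ F, ENNReal.ofReal (lam n * ‖dpair (e n) ℓ‖ ^ 2 / (α + lam n) ^ 2)
            ≤ ENNReal.ofReal ((dpair (xa α) (A (xa α))).re) := by
        refine eventually_mem_nhdsWithin.mono fun α hα => ?_
        rw [hofReal α hα]
        exact ENNReal.sum_le_tsum F
      calc ∑ n ∈ F, ENNReal.ofReal (‖dpair (e n) ℓ‖ ^ 2 / lam n)
          = liminf
            (fun α : ℝ => ∑ n ∈ F, ENNReal.ofReal (lam n * ‖dpair (e n) ℓ‖ ^ 2 / (α + lam n) ^ 2))
            (𝓝[>] (0:ℝ)) := htend.liminf_eq.symm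
        _ ≤ _ := Filter.liminf_le_liminf hev
  constructor
  · -- part 1: regularized solution
    unfold IsRegSolution
    intro α hα
    have key : ∀ n, (((fun α t => t / (α + t)) α (lam n) / lam n : ℝ) : ℂ)
        = ((lam n / (α * lam n + lam n ^ 2) : ℝ) : ℂ) := by
      intro n
      have hal : (0:ℝ) < α + lam n := by linarith [hlampos n]
      have h : lam n / (α + lam n) / lam n = lam n / (α * lam n + lam n ^ 2) := by
        rw [div_div, div_eq_div_iff (by nlinarith [hlampos n] :
            (0:ℝ) < (α + lam n) * lam n).ne'
          (by nlinarith [hlampos n] : (0:ℝ) < α * lam n + lam n ^ 2).ne']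
        ring
      exact congrArg _ h
    simpa only [key] using hxa α hα
  · -- part 2: range characterization
    rw [hlim]
    constructor
    · rintro ⟨v, rfl⟩
      refine lt_of_le_of_lt ?_ (ENNReal.ofReal_lt_top : ENNReal.ofReal (‖v‖ ^ 2 / β) < ⊤)
      rw [ENNReal.tsum_eq_iSup_sum]
      refine iSup_le fun F => ?_
      rw [← ENNReal.ofReal_sum_of_nonneg
        (fun n _ => div_nonneg (sq_nonneg _) (hlampos n).le)]
      refine ENNReal.ofReal_le_ofReal ?_
      have hnb : ∀ n, ‖dpair (e n) ((hadj S) v)‖ = ‖(⟪S (e n), v⟫ : ℂ)‖ := by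
        intro n
        simp only [dpair, hadj_apply, RCLike.norm_conj]
      rw [Finset.sum_congr rfl fun n _ => by rw [hnb n]]
      -- forward finset bound
      set a : ℕ → ℂ := fun n => ⟪S (e n), v⟫ with ha
      set c : ℕ → ℂ := fun n => a n / (lam n : ℂ) with hc
      set tF := ∑ n ∈ F, ‖a n‖ ^ 2 / lam n with htF
      have htF0 : (0:ℝ) ≤ tF :=
        Finset.sum_nonneg fun n _ => div_nonneg (sq_nonneg _) (hlampos n).le
      have hcval : ∀ n, lam n * ‖c n‖ ^ 2 = ‖a n‖ ^ 2 / lam n := by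
        intro n
        have h1 : ‖c n‖ = ‖a n‖ / lam n := by
          rw [hc]; simp only [norm_div, Complex.norm_real, Real.norm_eq_abs,
            abs_of_pos (hlampos n)]
        rw [h1, div_pow]
        field_simp [(hlampos n).ne']
      have h1 : β * ‖S (∑ n ∈ F, c n • e n)‖ ^ 2 ≤ tF := by
        refine (hzc c F).trans ?_
        rw [htF]
        exact le_of_eq (Finset.sum_congr rfl fun n _ => hcval n)
      set z : X := ∑ n ∈ F, c n • e n with hz
      have hSz : S z = ∑ n ∈ F, c n • S (e n) := by rw [hz]; simp [map_sum, map_smul]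
      have hinner : ⟪S z, v⟫ = ((tF : ℝ) : ℂ) := by
        rw [hSz, sum_inner (𝕜 := ℂ), htF]
        push_cast
        refine Finset.sum_congr rfl fun n _ => ?_
        rw [inner_smul_left, hc]
        simp only [map_div₀, Complex.conj_ofReal]
        rw [div_mul_eq_mul_div, mul_comm ((starRingEnd ℂ) (a n)), Complex.mul_conj]
        simp only [Complex.normSq_eq_norm_sq]
        push_cast; ring
      have h2 : tF ≤ ‖S z‖ * ‖v‖ := by
        calc tF = (⟪S z, v⟫ : ℂ).re := by rw [hinner]; simp
          _ ≤ ‖(⟪S z, v⟫ : ℂ)‖ := by exact Complex.re_le_norm _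
          _ ≤ ‖S z‖ * ‖v‖ := norm_inner_le_norm _ _
      rw [le_div_iff₀ hβ]
      rcases htF0.eq_or_lt with h0 | hpos
      · rw [← h0, zero_mul]; positivity
      · have hN2 : ‖S z‖ ^ 2 ≤ tF / β := (le_div_iff₀' hβ).mpr h1
        have ht2 : tF ^ 2 ≤ (tF / β) * ‖v‖ ^ 2 := by
          have hm := mul_le_mul h2 h2 htF0 (mul_nonneg (norm_nonneg (S z)) (norm_nonneg v))
          calc tF ^ 2 = tF * tF := sq tF
            _ ≤ (‖S z‖ * ‖v‖) * (‖S z‖ * ‖v‖) := hm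
            _ = ‖S z‖ ^ 2 * ‖v‖ ^ 2 := by ring
            _ ≤ (tF / β) * ‖v‖ ^ 2 := mul_le_mul_of_nonneg_right hN2 (sq_nonneg _)
        have hmul : tF * tF ≤ tF * (‖v‖ ^ 2 / β) := by
          calc tF * tF = tF ^ 2 := (sq tF).symm
            _ ≤ (tF / β) * ‖v‖ ^ 2 := ht2
            _ = tF * (‖v‖ ^ 2 / β) := by ring
        have h3 : tF ≤ ‖v‖ ^ 2 / β := le_of_mul_le_mul_left hmul hpos
        calc tF * β ≤ (‖v‖ ^ 2 / β) * β := mul_le_mul_of_nonneg_right h3 hβ.le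
          _ = ‖v‖ ^ 2 := div_mul_cancel₀ _ hβ.ne'
    · -- backward
      intro hfin
      have hs : Summable (fun n => ‖dpair (e n) ℓ‖ ^ 2 / lam n) := by
        have h := ENNReal.summable_toReal hfin.ne
        refine h.congr fun n => ?_
        exact ENNReal.toReal_ofReal (div_nonneg (sq_nonneg _) (hlampos n).le)
      set bn : ℕ → ℂ := fun n => dpair (e n) ℓ with hbn
      set c : ℕ → ℂ := fun n => starRingEnd ℂ (bn n) / (lam n : ℂ) with hc
      set g : ℕ → V := fun n => c n • S (e n) with hg
      have hcval : ∀ n, lam n * ‖c n‖ ^ 2 = ‖bn n‖ ^ 2 / lam n := by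
        intro n
        have h1 : ‖c n‖ = ‖bn n‖ / lam n := by
          rw [hc]; simp only [norm_div, Complex.norm_real, Real.norm_eq_abs,
            abs_of_pos (hlampos n), RCLike.norm_conj]
        rw [h1, div_pow]
        field_simp [(hlampos n).ne']
      have hgsum : Summable g := by
        rw [summable_iff_vanishing]
        intro U hU
        obtain ⟨ε, hε, hball⟩ := Metric.mem_nhds_iff.mp hU
        obtain ⟨F, hF⟩ := summable_iff_vanishing.mp hs (Metric.ball 0 (β * ε ^ 2))
          (Metric.ball_mem_nhds _ (by positivity))
        refine ⟨F, fun t ht => ?_⟩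
        have hst : ∑ n ∈ t, ‖bn n‖ ^ 2 / lam n < β * ε ^ 2 := by
          have := hF t ht
          rw [Metric.mem_ball, dist_zero_right, Real.norm_eq_abs] at this
          exact (le_abs_self _).trans_lt this
        have hSz : ∑ n ∈ t, g n = S (∑ n ∈ t, c n • e n) := by
          simp [hg, map_sum, map_smul]
        have hb1 : β * ‖∑ n ∈ t, g n‖ ^ 2 ≤ ∑ n ∈ t, ‖bn n‖ ^ 2 / lam n := by
          rw [hSz]
          refine (hzc c t).trans (le_of_eq (Finset.sum_congr rfl fun n _ => hcval n))
        have hlt : ‖∑ n ∈ t, g n‖ ^ 2 < ε ^ 2 :=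
          (mul_lt_mul_iff_right₀ hβ).mp (hb1.trans_lt hst)
        have : ‖∑ n ∈ t, g n‖ < ε := lt_of_pow_lt_pow_left₀ 2 hε.le hlt
        exact hball (Metric.mem_ball.mpr (by rwa [dist_zero_right]))
      obtain ⟨u, hu⟩ := hgsum
      refine ⟨T u, ?_⟩
      have key : ∀ x : X, (hadj S) (T u) x = ℓ x := by
        intro x
        have h1 := ((innerSL ℂ (S x)).comp T).hasSum hu
        have hterm : ∀ n, ((innerSL ℂ (S x)).comp T) (g n)
            = starRingEnd ℂ (bn n) * ⟪x, e n⟫ := by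
          intro n
          simp only [ContinuousLinearMap.comp_apply, innerSL_apply_apply, hg]
          rw [map_smul, inner_smul_right]
          have hTS : (⟪S x, T (S (e n))⟫ : ℂ) = (A (e n)) x := by
            rw [hAS]; rfl
          rw [hTS, heval, hc]
          field_simp [Complex.ofReal_ne_zero.mpr (hlampos n).ne']
        rw [funext hterm] at h1
        have h2 := (ℓ : X →L⋆[ℂ] ℂ).hasSum (hb x)
        have hterm2 : ∀ n, ℓ (⟪e n, x⟫ • e n) = starRingEnd ℂ (bn n) * ⟪x, e n⟫ := by
          intro n
          rw [ContinuousLinearMap.map_smulₛₗ]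
          have : ℓ (e n) = starRingEnd ℂ (bn n) := by
            rw [hbn]; simp [dpair]
          rw [this, ← inner_conj_symm x (e n)]
          ring_nf
        rw [funext hterm2] at h2
        have := h1.unique h2
        simpa only [ContinuousLinearMap.comp_apply, innerSL_apply_apply, hadj_apply] using this
      exact ContinuousLinearMap.ext key
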